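/- Let n be odd. Then the image of the map x ↦ x^3 + x on F_{2^n} equals {0} ∪ {ξ ≠ 0 : Tr(ξ^{-1}) = 0} ∪ {s + s^{-1} : s ∈ F_{2^{2n}}, s^{(2^n+1)/3} = 1, s ≠ 1}, where the three sets are pairwise disjoint. -/

import Mathlib

lemma char2 (K : Type*) [Field K] [Fintype K] (m : ℕ)
    (h : Fintype.card K = 2 ^ m) : CharP K 2 := by
  obtain ⟨p, hp⟩ := CharP.exists K
  haveI := hp
  obtain ⟨d, hpp, hcard⟩ := FiniteField.card K p
  have h2 : p = 2 := by
    have hdvd : p ∣ 2 ^ m := by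
      rw [← h, hcard]; exact dvd_pow_self p d.ne_zero
    have h1 := hpp.dvd_of_dvd_pow hdvd
    exact (Nat.prime_dvd_prime_iff_eq hpp Nat.prime_two).mp h1
  rw [← h2]; exact hp

lemma tel {K : Type*} [Field K] [CharP K 2] (m : ℕ) (y : K) (hy : y ^ 2 ^ m = y) :
    ∑ i ∈ Finset.range m, (y ^ 2 + y) ^ 2 ^ i = 0 := by
  have key : ∀ i, (y ^ 2 + y) ^ 2 ^ i = y ^ 2 ^ (i + 1) - y ^ 2 ^ i := by
    intro i
    rw [CharTwo.sub_eq_add, add_pow_char_pow]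
    congr 1
    rw [← pow_mul, mul_comm, ← pow_succ]
  simp_rw [key]
  rw [Finset.sum_range_sub (fun i => y ^ 2 ^ i), hy, pow_zero, pow_one, sub_self]

open Polynomial in
lemma hilbert {K : Type*} [Field K] [Fintype K] (m : ℕ) (hm : m ≠ 0)
    (hK : Fintype.card K = 2 ^ m) (a : K)
    (ha : ∑ i ∈ Finset.range m, a ^ 2 ^ i = 0) : ∃ y : K, y ^ 2 + y = a := by
  haveI : CharP K 2 := char2 K m hK
  classical
  set Rng : Finset K := Finset.univ.image (fun y : K => y ^ 2 + y) with hRng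
  -- fibers have card 2
  have hcard2 : 2 * Rng.card = 2 ^ m := by
    have h1 : (Finset.univ : Finset K).card
        = ∑ b ∈ Rng, (Finset.univ.filter (fun y : K => y ^ 2 + y = b)).card := by
      apply Finset.card_eq_sum_card_fiberwise
      intro x _; exact Finset.mem_image_of_mem _ (Finset.mem_univ x)
    have h2 : ∀ b ∈ Rng, (Finset.univ.filter (fun y : K => y ^ 2 + y = b)).card = 2 := by
      intro b hb
      obtain ⟨y0, _, hy0⟩ := Finset.mem_image.mp hb
      have : Finset.univ.filter (fun y : K => y ^ 2 + y = b) = {y0, y0 + 1} := by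
        ext y
        simp only [Finset.mem_filter, Finset.mem_univ, true_and, Finset.mem_insert,
          Finset.mem_singleton]
        constructor
        · intro hy
          have h2z : (2 : K) = 0 := CharTwo.two_eq_zero
          have hfac : (y + y0) * ((y + y0) + 1) = 0 := by
            linear_combination hy - hy0 + (y * y0 + y0 ^ 2 + y0) * h2z
          rcases mul_eq_zero.mp hfac with h | h
          · left; linear_combination h - y0 * h2z
          · right; linear_combination h - (y0 + 1) * h2z
        · rintro (rfl | rfl)
          · exact hy0
          · have h2z : (2 : K) = 0 := CharTwo.two_eq_zero
            linear_combination hy0 + (y0 + 1) * h2z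
      rw [this]
      rw [Finset.card_insert_of_notMem, Finset.card_singleton]
      simp only [Finset.mem_singleton]
      intro h
      exact one_ne_zero (by linear_combination -h : (1 : K) = 0)
    rw [Finset.card_univ, hK] at h1
    rw [h1, Finset.sum_congr rfl h2, Finset.sum_const, smul_eq_mul, mul_comm]
  -- the trace polynomial
  set Q : K[X] := ∑ i ∈ Finset.range m, (X : K[X]) ^ 2 ^ i with hQ
  have hQmonic : Q.Monic := by
    rw [hQ]
    obtain ⟨m', rfl⟩ : ∃ m', m = m' + 1 := ⟨m - 1, by omega⟩
    rw [Finset.sum_range_succ]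
    apply Polynomial.Monic.add_of_right (monic_X_pow _)
    apply lt_of_le_of_lt (Polynomial.degree_sum_le _ _)
    rw [Finset.sup_lt_iff (by rw [degree_X_pow]; exact_mod_cast WithBot.bot_lt_coe (2 ^ m'))]
    intro i hi
    rw [degree_X_pow, degree_X_pow]
    exact_mod_cast Nat.pow_lt_pow_right one_lt_two (Finset.mem_range.mp hi)
  have hQdeg : Q.natDegree ≤ 2 ^ (m - 1) := by
    apply le_trans (Polynomial.natDegree_sum_le _ _)
    refine (Finset.fold_max_le _).mpr ⟨Nat.zero_le _, fun i hi => ?_⟩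
    simp only [Function.comp]
    rw [natDegree_X_pow]
    exact Nat.pow_le_pow_right (by norm_num) (by have := Finset.mem_range.mp hi; omega : i ≤ m - 1)
  have hQeval : ∀ b : K, Q.eval b = ∑ i ∈ Finset.range m, b ^ 2 ^ i := by
    intro b; rw [hQ]; simp [Polynomial.eval_finset_sum]
  -- Rng ⊆ roots of Q
  have hsub : Rng ⊆ Q.roots.toFinset := by
    intro b hb
    obtain ⟨y, _, hy⟩ := Finset.mem_image.mp hb
    rw [Multiset.mem_toFinset, Polynomial.mem_roots hQmonic.ne_zero]
    show Q.eval b = 0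
    rw [hQeval, ← hy]
    exact tel m y (by rw [← hK]; exact FiniteField.pow_card y)
  have hroots_card : Q.roots.toFinset.card ≤ 2 ^ (m - 1) :=
    le_trans (le_trans (Multiset.toFinset_card_le _) (Polynomial.card_roots' Q)) hQdeg
  have heq : Rng = Q.roots.toFinset := by
    apply Finset.eq_of_subset_of_card_le hsub
    apply le_trans hroots_card
    have : 2 ^ m = 2 * 2 ^ (m - 1) := by
      rw [← pow_succ']; congr 1; omega
    omega
  have haQ : a ∈ Q.roots.toFinset := by
    rw [Multiset.mem_toFinset, Polynomial.mem_roots hQmonic.ne_zero]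
    show Q.eval a = 0
    rw [hQeval]; exact ha
  rw [← heq] at haQ
  obtain ⟨y, _, hy⟩ := Finset.mem_image.mp haQ
  exact ⟨y, hy⟩

open Polynomial in
lemma fixed_field {F E : Type*} [Field F] [Fintype F] [Field E] [Fintype E] [Algebra F E]
    (n : ℕ) (hn : n ≠ 0) (hF : Fintype.card F = 2 ^ n) (z : E) (hz : z ^ 2 ^ n = z) :
    ∃ x : F, algebraMap F E x = z := by
  classical
  set T : Finset E := Finset.univ.image (algebraMap F E) with hT
  have hTcard : T.card = 2 ^ n := by
    rw [hT, Finset.card_image_of_injective _ (algebraMap F E).injective,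
      Finset.card_univ, hF]
  set P : E[X] := X ^ 2 ^ n - X with hP
  have h1 : 1 < 2 ^ n := Nat.one_lt_pow hn one_lt_two
  have hPne : P ≠ 0 := FiniteField.X_pow_card_sub_X_ne_zero E h1
  have hPdeg : P.natDegree = 2 ^ n := FiniteField.X_pow_card_sub_X_natDegree_eq E h1
  have hsub : T ⊆ P.roots.toFinset := by
    intro w hw
    obtain ⟨x, _, rfl⟩ := Finset.mem_image.mp hw
    rw [Multiset.mem_toFinset, Polynomial.mem_roots hPne]
    show P.eval _ = 0
    rw [hP]
    simp only [Polynomial.eval_sub, Polynomial.eval_pow, Polynomial.eval_X]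
    rw [← map_pow, ← hF, FiniteField.pow_card, sub_self]
  have heq : T = P.roots.toFinset := by
    apply Finset.eq_of_subset_of_card_le hsub
    calc P.roots.toFinset.card ≤ P.roots.card := Multiset.toFinset_card_le _
      _ ≤ P.natDegree := Polynomial.card_roots' P
      _ = T.card := by rw [hPdeg, hTcard]
  have hzmem : z ∈ P.roots.toFinset := by
    rw [Multiset.mem_toFinset, Polynomial.mem_roots hPne]
    show P.eval z = 0
    rw [hP]
    simp only [Polynomial.eval_sub, Polynomial.eval_pow, Polynomial.eval_X]
    rw [hz, sub_self]
  rw [← heq] at hzmem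
  obtain ⟨x, _, hx⟩ := Finset.mem_image.mp hzmem
  exact ⟨x, hx⟩

lemma dvd1 (n : ℕ) (hn : Odd n) : 3 ∣ 2 ^ n + 1 := by
  obtain ⟨k, rfl⟩ := hn
  have h4 : (4 : ℕ) ^ k ≡ 1 ^ k [MOD 3] := Nat.ModEq.pow k (by decide)
  have h : 2 ^ (2 * k + 1) = 2 * 4 ^ k := by
    rw [pow_succ, pow_mul]; ring
  have : 2 ^ (2 * k + 1) + 1 ≡ 2 * 1 + 1 [MOD 3] := by
    rw [h]; exact ((h4.trans (by simp [Nat.ModEq])).mul_left 2).add_right 1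
  exact (Nat.modEq_zero_iff_dvd).mp (this.trans (by decide))

lemma dvd2 (n : ℕ) (hn : Odd n) : 3 ∣ 2 ^ (n + 1) - 1 := by
  obtain ⟨k, rfl⟩ := hn
  have h4 : (4 : ℕ) ^ (k + 1) ≡ 1 ^ (k + 1) [MOD 3] := Nat.ModEq.pow _ (by decide)
  have h : 2 ^ (2 * k + 1 + 1) = 4 ^ (k + 1) := by
    rw [show 2 * k + 1 + 1 = 2 * (k + 1) by ring, pow_mul]; norm_num
  rw [h]
  have h1 : 1 ≤ 4 ^ (k + 1) := Nat.one_le_pow _ _ (by norm_num)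
  exact (Nat.modEq_iff_dvd' h1).mp (h4.trans (by simp [Nat.ModEq])).symm

lemma cube_id {K : Type*} [Field K] [CharP K 2] (u v : K) (huv : u * v = 1) :
    (u + v) ^ 3 + (u + v) = u ^ 3 + v ^ 3 := by
  have h2 : (2 : K) = 0 := CharTwo.two_eq_zero
  linear_combination (3 * (u + v)) * huv + (2 * (u + v)) * h2

lemma cube_root_F {F : Type*} [Field F] [Fintype F] (n : ℕ) (hn : Odd n)
    (hF : Fintype.card F = 2 ^ n) (a : F) (ha : a ≠ 0) : ∃ w : F, w ≠ 0 ∧ w ^ 3 = a := by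
  obtain ⟨k, hk⟩ := dvd2 n hn
  refine ⟨a ^ k, pow_ne_zero _ ha, ?_⟩
  have h1 : (1 : ℕ) ≤ 2 ^ n := Nat.one_le_two_pow
  have h3k : 3 * k = 2 * (2 ^ n - 1) + 1 := by
    have : 2 ^ (n + 1) = 2 * 2 ^ n := by rw [pow_succ]; ring
    omega
  rw [← pow_mul, mul_comm k 3, h3k, pow_add, mul_comm 2 (2 ^ n - 1), pow_mul, pow_one,
    ← hF, FiniteField.pow_card_sub_one_eq_one a ha, one_pow, one_mul]

lemma trace_E_zero {F E : Type*} [Field F] [Fintype F] [Field E] [Algebra F E]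
    [CharP E 2] (n : ℕ) (hF : Fintype.card F = 2 ^ n) (b : F) :
    ∑ i ∈ Finset.range (2 * n), (algebraMap F E b) ^ 2 ^ i = 0 := by
  set a : E := algebraMap F E b with hadef
  have ha : a ^ 2 ^ n = a := by
    rw [hadef, ← map_pow, ← hF, FiniteField.pow_card]
  have key : ∀ i, a ^ 2 ^ (n + i) = a ^ 2 ^ i := by
    intro i
    rw [pow_add, pow_mul, ha]
  rw [two_mul, Finset.sum_range_add]
  simp_rw [key]
  exact CharTwo.add_self_eq_zero _

lemma cube_root_mu {E : Type*} [Field E] [Fintype E] (n : ℕ) (hn : Odd n)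
    (hE : Fintype.card E = 2 ^ (2 * n)) (s : E) (hs : s ^ ((2 ^ n + 1) / 3) = 1) :
    ∃ u : E, u ≠ 0 ∧ u ^ 3 = s ∧ u ^ (2 ^ n + 1) = 1 := by
  classical
  set q : ℕ := 2 ^ n with hq
  set M : ℕ := (q + 1) / 3 with hM
  have h3M : 3 * M = q + 1 := by rw [hM, hq]; exact Nat.mul_div_cancel' (dvd1 n hn)
  have hq1 : 1 ≤ q := Nat.one_le_two_pow
  have hMpos : 0 < M := by omega
  have hs0 : s ≠ 0 := by
    intro h; rw [h, zero_pow (by omega)] at hs; exact zero_ne_one hs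
  have hkey : q * q = 3 * M * (q - 1) + 1 := by
    rw [h3M]
    obtain ⟨m, hm⟩ : ∃ m, q = m + 1 := ⟨q - 1, by omega⟩
    rw [hm]
    simp only [Nat.add_sub_cancel]
    ring
  have hcardE : Fintype.card Eˣ = 3 * M * (q - 1) := by
    rw [Fintype.card_units, hE, two_mul, pow_add, ← hq]
    exact Nat.sub_eq_of_eq_add hkey
  obtain ⟨g, hg⟩ := IsCyclic.exists_monoid_generator (α := Eˣ)
  set S : Eˣ := Units.mk0 s hs0 with hS
  obtain ⟨k, hk⟩ := hg S
  have hord : orderOf g = 3 * M * (q - 1) := by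
    rw [orderOf_eq_card_of_forall_mem_zpowers, Nat.card_eq_fintype_card, hcardE]
    intro x
    obtain ⟨j, hj⟩ := hg x
    exact ⟨(j : ℤ), by simpa using hj⟩
  have hSM : S ^ M = 1 := by
    ext
    push_cast
    exact hs
  have hdvd : 3 * M * (q - 1) ∣ k * M := by
    rw [← hord]
    apply orderOf_dvd_of_pow_eq_one
    rw [← hk, ← pow_mul] at hSM
    exact hSM
  have hdvd2 : 3 * (q - 1) ∣ k := by
    have h : (3 * (q - 1)) * M ∣ k * M := by
      have : 3 * M * (q - 1) = 3 * (q - 1) * M := by ring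
      rw [← this]; exact hdvd
    exact (Nat.mul_dvd_mul_iff_right hMpos).mp h
  obtain ⟨t, ht⟩ := hdvd2
  refine ⟨((g ^ ((q - 1) * t) : Eˣ) : E), Units.ne_zero _, ?_, ?_⟩
  · have : (g ^ ((q - 1) * t)) ^ 3 = S := by
      rw [← pow_mul, ← hk, ht]
      congr 1
      ring
    calc ((g ^ ((q - 1) * t) : Eˣ) : E) ^ 3 = ((g ^ ((q - 1) * t)) ^ 3 : Eˣ) := by push_cast; ring
      _ = (S : E) := by rw [this]
      _ = s := rfl
  · have h1 : (g ^ ((q - 1) * t)) ^ (q + 1) = 1 := by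
      rw [← pow_mul, show (q - 1) * t * (q + 1) = 3 * M * (q - 1) * t by rw [← h3M]; ring,
        pow_mul, ← hord, pow_orderOf_eq_one, one_pow]
    calc ((g ^ ((q - 1) * t) : Eˣ) : E) ^ (q + 1) = ((g ^ ((q - 1) * t)) ^ (q + 1) : Eˣ) := by
          push_cast; ring
      _ = 1 := by rw [h1]; rfl

theorem stmt_14 (n : ℕ) (hn : Odd n) (F : Type*) [Field F] [Fintype F]
    (hF : Fintype.card F = 2 ^ n) (E : Type*) [Field E] [Fintype E] [Algebra F E]
    (hE : Fintype.card E = 2 ^ (2 * n)) :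
    Set.range (fun x : F => x ^ 3 + x) =
      {0} ∪ {ξ : F | ξ ≠ 0 ∧ ∑ i ∈ Finset.range n, ξ⁻¹ ^ 2 ^ i = 0}
        ∪ {ξ : F | ∃ s : E, s ^ ((2 ^ n + 1) / 3) = 1 ∧ s ≠ 1 ∧
            algebraMap F E ξ = s + s⁻¹} ∧
    Disjoint ({0} : Set F) {ξ : F | ξ ≠ 0 ∧ ∑ i ∈ Finset.range n, ξ⁻¹ ^ 2 ^ i = 0} ∧
    Disjoint ({0} : Set F) {ξ : F | ∃ s : E, s ^ ((2 ^ n + 1) / 3) = 1 ∧ s ≠ 1 ∧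
      algebraMap F E ξ = s + s⁻¹} ∧
    Disjoint {ξ : F | ξ ≠ 0 ∧ ∑ i ∈ Finset.range n, ξ⁻¹ ^ 2 ^ i = 0}
      {ξ : F | ∃ s : E, s ^ ((2 ^ n + 1) / 3) = 1 ∧ s ≠ 1 ∧
        algebraMap F E ξ = s + s⁻¹} := by
  have hn0 : n ≠ 0 := by rcases hn with ⟨k, hk⟩; omega
  haveI hcF : CharP F 2 := char2 F n hF
  haveI hcE : CharP E 2 := char2 E (2 * n) hE
  have h2F : (2 : F) = 0 := CharTwo.two_eq_zero
  have h2E : (2 : E) = 0 := CharTwo.two_eq_zero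
  have hq1 : 1 ≤ 2 ^ n := Nat.one_le_two_pow
  have h3M : 3 * ((2 ^ n + 1) / 3) = 2 ^ n + 1 := Nat.mul_div_cancel' (dvd1 n hn)
  have hMpos : 0 < (2 ^ n + 1) / 3 := by omega
  have hinj : Function.Injective (algebraMap F E) := (algebraMap F E).injective
  have hfrobF : ∀ a : F, a ^ 2 ^ n = a := by
    intro a; rw [← hF]; exact FiniteField.pow_card a
  have hfrobFE : ∀ a : F, (algebraMap F E a) ^ 2 ^ n = algebraMap F E a := by
    intro a; rw [← map_pow, hfrobF]
  have hs_ne_zero : ∀ s : E, s ^ ((2 ^ n + 1) / 3) = 1 → s ≠ 0 := by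
    intro s hs h
    rw [h, zero_pow (by omega)] at hs
    exact zero_ne_one hs
  have hs_q : ∀ s : E, s ^ ((2 ^ n + 1) / 3) = 1 → s ^ 2 ^ n * s = 1 := by
    intro s hs
    rw [← pow_succ, ← h3M, pow_mul', hs, one_pow]
  refine ⟨?_, ?_, ?_, ?_⟩
  · -- main set equality
    ext ξ
    simp only [Set.mem_union, Set.mem_singleton_iff, Set.mem_setOf_eq, Set.mem_range]
    constructor
    · rintro ⟨x, rfl⟩
      by_cases hξ : x ^ 3 + x = 0
      · exact Or.inl (Or.inl hξ)
      have hx0 : x ≠ 0 := by rintro rfl; simp at hξ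
      obtain ⟨X, hX⟩ : ∃ X : E, X = algebraMap F E x := ⟨_, rfl⟩
      have hX0 : X ≠ 0 := fun h => hx0 (hinj (by rw [← hX, h, map_zero]))
      have hXq : X ^ 2 ^ n = X := by rw [hX]; exact hfrobFE x
      obtain ⟨y, hy⟩ := hilbert (2 * n) (by omega) hE ((X ^ 2)⁻¹) (by
        rw [hX, ← map_pow, ← map_inv₀]
        exact trace_E_zero n hF ((x ^ 2)⁻¹))
      obtain ⟨u, hu⟩ : ∃ u : E, u = X * y := ⟨_, rfl⟩
      have hueq : u ^ 2 + X * u = 1 := by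
        have hX2 : (X ^ 2) * (X ^ 2)⁻¹ = 1 := mul_inv_cancel₀ (pow_ne_zero 2 hX0)
        calc u ^ 2 + X * u = X ^ 2 * (y ^ 2 + y) := by rw [hu]; ring
          _ = 1 := by rw [hy, hX2]
      have hu0 : u ≠ 0 := by
        rintro h
        rw [h] at hueq
        simp at hueq
      have huinv : u⁻¹ = u + X :=
        inv_eq_of_mul_eq_one_right (by linear_combination hueq)
      have hXuu : u + u⁻¹ = X := by
        rw [huinv]
        linear_combination u * h2E
      have hcubeE : X ^ 3 + X = u ^ 3 + (u ^ 3)⁻¹ := by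
        rw [← hXuu, ← inv_pow]
        exact cube_id u u⁻¹ (mul_inv_cancel₀ hu0)
      have hfrob_eq : (u ^ 2 ^ n) ^ 2 + X * u ^ 2 ^ n = 1 := by
        have h1 : (u ^ 2 + X * u) ^ 2 ^ n = 1 := by rw [hueq, one_pow]
        rw [add_pow_char_pow, mul_pow, hXq, ← pow_mul, mul_comm 2 (2 ^ n), pow_mul] at h1
        exact h1
      have hdichot : (u ^ 2 ^ n + u) * ((u ^ 2 ^ n + u) + X) = 0 := by
        linear_combination hfrob_eq + hueq + (u ^ 2 ^ n * u + 1) * h2E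
      rcases mul_eq_zero.mp hdichot with hcase | hcase
      · -- u is fixed by Frobenius
        have hufix : u ^ 2 ^ n = u := by linear_combination hcase - u * h2E
        obtain ⟨w, hw⟩ := fixed_field n hn0 hF u hufix
        have hw0 : w ≠ 0 := by rintro rfl; rw [map_zero] at hw; exact hu0 hw.symm
        have hcube : x ^ 3 + x = w ^ 3 + (w ^ 3)⁻¹ := by
          apply hinj
          rw [map_add, map_pow, map_add, map_pow, map_inv₀, map_pow, hw, ← hX]
          exact hcubeE
        obtain ⟨W, hWdef⟩ : ∃ W : F, W = w ^ 3 := ⟨_, rfl⟩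
        rw [← hWdef] at hcube
        have hW0 : W ≠ 0 := by rw [hWdef]; exact pow_ne_zero 3 hw0
        have hW1 : W ≠ 1 := by
          rintro h
          apply hξ
          rw [hcube, h, inv_one]
          exact CharTwo.add_self_eq_zero 1
        have hW1' : W + 1 ≠ 0 := by
          intro h; exact hW1 (by linear_combination h - h2F)
        obtain ⟨z, hzdef⟩ : ∃ z : F, z = (W + 1)⁻¹ := ⟨_, rfl⟩
        have hzW : z * (W + 1) = 1 := by rw [hzdef]; exact inv_mul_cancel₀ hW1'
        have hWinv : W * W⁻¹ = 1 := mul_inv_cancel₀ hW0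
        have hzzeq : (x ^ 3 + x) * (z ^ 2 + z) = 1 := by
          rw [hcube, hzdef]
          field_simp
          linear_combination h2F
        refine Or.inl (Or.inr ⟨hξ, ?_⟩)
        have hinvval : (x ^ 3 + x)⁻¹ = z ^ 2 + z :=
          inv_eq_of_mul_eq_one_right hzzeq
        rw [hinvval]
        exact tel n z (hfrobF z)
      · -- u^{2^n} = u⁻¹
        have hufix : u ^ 2 ^ n = u + X := by
          linear_combination hcase - (u + X) * h2E
        have huq : u ^ 2 ^ n = u⁻¹ := by rw [hufix, ← huinv]
        refine Or.inr ⟨u ^ 3, ?_, ?_, ?_⟩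
        · calc (u ^ 3) ^ ((2 ^ n + 1) / 3) = u ^ (3 * ((2 ^ n + 1) / 3)) := by
                rw [← pow_mul]
            _ = u ^ (2 ^ n + 1) := by rw [h3M]
            _ = 1 := by rw [pow_succ, huq, inv_mul_cancel₀ hu0]
        · intro h
          apply hξ
          apply hinj
          rw [map_add, map_pow, ← hX, map_zero, hcubeE, h, inv_one]
          exact CharTwo.add_self_eq_zero 1
        · rw [map_add, map_pow, ← hX]
          exact hcubeE
    · rintro ((h | ⟨hξ0, hTr⟩) | ⟨s, hsM, hs1, hmap⟩)
      · exact ⟨0, by simp [h]⟩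
      · obtain ⟨z, hz⟩ := hilbert n hn0 hF ξ⁻¹ hTr
        have hzz0 : z ^ 2 + z ≠ 0 := by rw [hz]; exact inv_ne_zero hξ0
        have hz0 : z ≠ 0 := by rintro rfl; simp at hzz0
        have hz1 : z ≠ 1 := by rintro rfl; exact hzz0 (by linear_combination h2F)
        have hzi : z * z⁻¹ = 1 := mul_inv_cancel₀ hz0
        have hz1' : 1 + z ≠ 0 := by
          intro h
          exact hz1 (by linear_combination h - h2F)
        have hWne : z⁻¹ + 1 ≠ 0 := by
          intro h
          have h1 : z⁻¹ = 1 := by linear_combination h - h2F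
          exact hz1 (by rw [← inv_inv z, h1, inv_one])
        obtain ⟨W, hWdef⟩ : ∃ W : F, W = z⁻¹ + 1 := ⟨_, rfl⟩
        have hW0 : W ≠ 0 := by rw [hWdef]; exact hWne
        have hWξ : W + W⁻¹ = ξ := by
          have h1 : (W + W⁻¹) * (z ^ 2 + z) = 1 := by
            rw [hWdef]
            field_simp [hz1']
            linear_combination (z + 2 * z ^ 2 + z ^ 3) * h2F
          have h2 : ξ * (z ^ 2 + z) = 1 := by rw [hz]; exact mul_inv_cancel₀ hξ0
          exact mul_right_cancel₀ hzz0 (h1.trans h2.symm)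
        obtain ⟨w, hw0, hw3⟩ := cube_root_F n hn hF W hW0
        refine ⟨w + w⁻¹, ?_⟩
        show (w + w⁻¹) ^ 3 + (w + w⁻¹) = ξ
        rw [cube_id w w⁻¹ (mul_inv_cancel₀ hw0), inv_pow, hw3, hWξ]
      · obtain ⟨u, hu0, hu3, huq1⟩ := cube_root_mu n hn hE s hsM
        have huq : u ^ 2 ^ n = u⁻¹ :=
          eq_inv_of_mul_eq_one_left (by rw [← pow_succ, huq1])
        obtain ⟨xv, hxv⟩ : ∃ xv : E, xv = u + u⁻¹ := ⟨_, rfl⟩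
        have hfix : xv ^ 2 ^ n = xv := by
          rw [hxv, add_pow_char_pow, huq, inv_pow, huq, inv_inv, add_comm]
        obtain ⟨x, hx⟩ := fixed_field n hn0 hF xv hfix
        refine ⟨x, ?_⟩
        show x ^ 3 + x = ξ
        apply hinj
        rw [map_add, map_pow, hx, hmap, hxv,
          cube_id u u⁻¹ (mul_inv_cancel₀ hu0), inv_pow, hu3]
  · -- A ⟂ B
    rw [Set.disjoint_left]
    rintro ξ rfl ⟨h, _⟩
    exact h rfl
  · -- A ⟂ C
    rw [Set.disjoint_left]
    rintro ξ rfl ⟨s, hsM, hs1, hmap⟩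
    rw [map_zero] at hmap
    have hs0 : s ≠ 0 := hs_ne_zero s hsM
    have h : (s + 1) ^ 2 = 0 := by
      have h1 : s * s + 1 = 0 := by
        have h2 := congrArg (fun t => s * t) hmap.symm
        simp only [mul_zero] at h2
        rw [mul_add, mul_inv_cancel₀ hs0] at h2
        linear_combination h2
      linear_combination h1 + s * h2E
    exact hs1 (by linear_combination (pow_eq_zero_iff (n := 2) (by norm_num)).mp h - h2E)
  · -- B ⟂ C
    rw [Set.disjoint_left]
    rintro ξ ⟨hξ0, hTr⟩ ⟨s, hsM, hs1, hmap⟩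
    have hs0 : s ≠ 0 := hs_ne_zero s hsM
    have hsi : s⁻¹ * s = 1 := inv_mul_cancel₀ hs0
    have hsq : s ^ 2 ^ n = s⁻¹ := eq_inv_of_mul_eq_one_left (hs_q s hsM)
    have hs1' : s + 1 ≠ 0 := by
      intro h
      exact hs1 (by linear_combination h - h2E)
    obtain ⟨y, hy⟩ := hilbert n hn0 hF ξ⁻¹ hTr
    obtain ⟨Y, hYdef⟩ : ∃ Y : E, Y = algebraMap F E y := ⟨_, rfl⟩
    have hYfix : Y ^ 2 ^ n = Y := by rw [hYdef]; exact hfrobFE y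
    have hYeq : Y ^ 2 + Y = (s + s⁻¹)⁻¹ := by
      rw [hYdef, ← map_pow, ← map_add, hy, map_inv₀, hmap]
    obtain ⟨z, hzdef⟩ : ∃ z : E, z = (s + 1)⁻¹ := ⟨_, rfl⟩
    have hza : z * (s + 1) = 1 := by rw [hzdef]; exact inv_mul_cancel₀ hs1'
    have hss0 : s + s⁻¹ ≠ 0 := by
      rw [← hmap]
      intro h
      exact hξ0 (hinj (by rw [h, map_zero]))
    have hzeq : z ^ 2 + z = (s + s⁻¹)⁻¹ := by
      symm
      apply inv_eq_of_mul_eq_one_left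
      rw [hzdef]
      field_simp
      linear_combination h2E
    have hzq : z ^ 2 ^ n = z + 1 := by
      rw [hzdef, inv_pow, add_pow_char_pow, one_pow, hsq]
      apply inv_eq_of_mul_eq_one_right
      field_simp
      linear_combination (s + 1) * h2E
    have hcases : (Y + z) * ((Y + z) + 1) = 0 := by
      linear_combination hYeq - hzeq + (Y * z + z + z ^ 2) * h2E
    rcases mul_eq_zero.mp hcases with h | h
    · have hYz : Y = z := by linear_combination h - z * h2E
      rw [hYz, hzq] at hYfix
      exact one_ne_zero (by linear_combination hYfix : (1 : E) = 0)
    · have hYz : Y = z + 1 := by linear_combination h - (z + 1) * h2E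
      rw [hYz, add_pow_char_pow, one_pow, hzq] at hYfix
      exact one_ne_zero (by linear_combination hYfix : (1 : E) = 0)
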